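/- Let C = GRS_k(a,b) with a an n-tuple of distinct elements of F_q, b an n-tuple of nonzero elements, and 2k-1 ≤ n. Then the square code C^(2) = ⟨C*C⟩ equals GRS_{2k-1}(a, b*b); in particular dim C^(2) = 2k-1. -/

import Mathlib

open Matrix Module

/-- The span of all coordinatewise (star) products of elements of `A` and `B`. -/
def starSpan {F : Type*} [Field F] {n : ℕ} (A B : Submodule F (Fin n → F)) :
    Submodule F (Fin n → F) :=
  Submodule.span F {x | ∃ a ∈ A, ∃ b ∈ B, x = a * b}

/-- The dual code, with respect to the standard inner product. -/
def dualCode {F : Type*} [Field F] {n : ℕ} (C : Submodule F (Fin n → F)) :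
    Submodule F (Fin n → F) where
  carrier := {x | ∀ c ∈ C, x ⬝ᵥ c = 0}
  add_mem' := by
    intro a b ha hb c hc
    simp [add_dotProduct, ha c hc, hb c hc]
  zero_mem' := by
    intro c hc
    simp
  smul_mem' := by
    intro r a ha c hc
    simp [smul_dotProduct, ha c hc]

/-- Minimum Hamming distance (= minimum weight of a nonzero codeword) of a linear code. -/
noncomputable def minDist {F : Type*} [Field F] [DecidableEq F] {n : ℕ}
    (C : Submodule F (Fin n → F)) : ℕ :=
  sInf {w | ∃ c ∈ C, c ≠ 0 ∧ w = hammingNorm c}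

/-- `(A, B)` is a `t`-error-correcting pair for the code `C` over `F`, where `A` and `B` are
codes over an extension field `K` of `F`: (E.1) `(A*B) ⊥ C`; (E.2) `dim A > t`;
(E.3) `d(B^⊥) > t`; (E.4) `d(A) + d(C) > n`. -/
def IsECP (F K : Type*) [Field F] [Field K] [Algebra F K] [DecidableEq F] [DecidableEq K]
    {n : ℕ} (t : ℕ) (A B : Submodule K (Fin n → K)) (C : Submodule F (Fin n → F)) : Prop :=
  (∀ a ∈ A, ∀ b ∈ B, ∀ c ∈ C, (a * b) ⬝ᵥ (fun i => algebraMap F K (c i)) = 0) ∧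
  t < finrank K A ∧
  t < minDist (dualCode B) ∧
  n < minDist A + minDist C

/-- The generalized Reed–Solomon code `GRS_k(a, b)`. -/
def GRS (F : Type*) [Field F] {n : ℕ} (k : ℕ) (a b : Fin n → F) : Submodule F (Fin n → F) :=
  Submodule.span F
    {v | ∃ f : Polynomial F, f.degree < (k : WithBot ℕ) ∧ v = fun i => f.eval (a i) * b i}


section helpers

open Polynomial

variable {F : Type*} [Field F] {n : ℕ}

/-- The evaluation map underlying a GRS code. -/
noncomputable def evalMapAux (a b : Fin n → F) : F[X] →ₗ[F] (Fin n → F) where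
  toFun f := fun i => f.eval (a i) * b i
  map_add' f g := by funext i; simp [add_mul]
  map_smul' c f := by funext i; simp [mul_assoc]

theorem grs_eq_map (k : ℕ) (a b : Fin n → F) :
    GRS F k a b = Submodule.map (evalMapAux a b) (Polynomial.degreeLT F k) := by
  rw [GRS, ← Submodule.span_eq (Submodule.map _ _)]
  congr 1
  ext v
  constructor
  · rintro ⟨f, hf, rfl⟩
    exact ⟨f, Polynomial.mem_degreeLT.2 hf, rfl⟩
  · rintro ⟨f, hf, rfl⟩
    exact ⟨f, Polynomial.mem_degreeLT.1 hf, rfl⟩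

theorem grs_finrank (m : ℕ) (hm : m ≤ n) (a b : Fin n → F) (ha : Function.Injective a)
    (hb : ∀ i, b i ≠ 0) : finrank F (GRS F m a b) = m := by
  rw [grs_eq_map]
  have h1 : Submodule.map (evalMapAux a b) (degreeLT F m)
      = LinearMap.range ((evalMapAux a b) ∘ₗ (degreeLT F m).subtype) := by
    rw [LinearMap.range_comp, Submodule.range_subtype]
  rw [h1]
  have hinj : Function.Injective ((evalMapAux a b) ∘ₗ (degreeLT F m).subtype) := by
    rw [← LinearMap.ker_eq_bot, LinearMap.ker_eq_bot']
    rintro ⟨f, hf⟩ hfz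
    have heval : ∀ i, f.eval (a i) = 0 := by
      intro i
      have h2 := congrFun hfz i
      simp only [LinearMap.comp_apply, Submodule.subtype_apply, evalMapAux,
        LinearMap.coe_mk, AddHom.coe_mk, Pi.zero_apply] at h2
      rcases mul_eq_zero.1 h2 with h | h
      · exact h
      · exact absurd h (hb i)
    ext1
    dsimp only
    rcases eq_or_ne f 0 with h | h
    · exact h
    · apply Polynomial.eq_zero_of_natDegree_lt_card_of_eval_eq_zero f ha heval
      rw [Fintype.card_fin]
      calc natDegree f < m := (Polynomial.natDegree_lt_iff_degree_lt h).2
              (Polynomial.mem_degreeLT.1 hf)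
        _ ≤ n := hm
  rw [LinearMap.finrank_range_of_inj hinj, (Polynomial.degreeLTEquiv F m).finrank_eq,
    Module.finrank_fin_fun]

end helpers

/-- For `C = GRS_k(a,b)` with `2k - 1 ≤ n`, `a` an `n`-tuple of distinct elements and `b`
an `n`-tuple of nonzero elements, the square code `C^(2) = ⟨C*C⟩` equals
`GRS_{2k-1}(a, b*b)`; in particular `dim C^(2) = 2k - 1`. -/
theorem stmt8 {F : Type*} [Field F] {n : ℕ} (k : ℕ) (hk : 1 ≤ k) (hkn : 2 * k - 1 ≤ n)
    (a b : Fin n → F) (ha : Function.Injective a) (hb : ∀ i, b i ≠ 0) :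
    starSpan (GRS F k a b) (GRS F k a b) = GRS F (2 * k - 1) a (b * b) ∧
    Module.finrank F (starSpan (GRS F k a b) (GRS F k a b)) = 2 * k - 1 := by
  classical
  have heq : starSpan (GRS F k a b) (GRS F k a b) = GRS F (2 * k - 1) a (b * b) := by
    apply le_antisymm
    · rw [starSpan, Submodule.span_le]
      rintro x ⟨u, hu, v, hv, rfl⟩
      rw [grs_eq_map] at hu hv
      obtain ⟨f, hf, rfl⟩ := hu
      obtain ⟨g, hg, rfl⟩ := hv
      rw [SetLike.mem_coe, grs_eq_map]
      refine ⟨f * g, ?_, ?_⟩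
      · rw [SetLike.mem_coe, Polynomial.mem_degreeLT]
        rcases eq_or_ne f 0 with rfl | hf0
        · simp only [zero_mul, Polynomial.degree_zero]
          exact WithBot.bot_lt_coe _
        rcases eq_or_ne g 0 with rfl | hg0
        · simp only [mul_zero, Polynomial.degree_zero]
          exact WithBot.bot_lt_coe _
        have hfg : f * g ≠ 0 := mul_ne_zero hf0 hg0
        rw [← Polynomial.natDegree_lt_iff_degree_lt hfg, Polynomial.natDegree_mul hf0 hg0]
        have h1 : Polynomial.natDegree f < k := (Polynomial.natDegree_lt_iff_degree_lt hf0).2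
          (Polynomial.mem_degreeLT.1 hf)
        have h2 : Polynomial.natDegree g < k := (Polynomial.natDegree_lt_iff_degree_lt hg0).2
          (Polynomial.mem_degreeLT.1 hg)
        omega
      · funext i
        simp only [evalMapAux, LinearMap.coe_mk, AddHom.coe_mk, Pi.mul_apply,
          Polynomial.eval_mul]
        ring
    · rw [grs_eq_map (2 * k - 1), Polynomial.degreeLT_eq_span_X_pow, Submodule.map_span,
        Submodule.span_le]
      rintro x ⟨p, hp, rfl⟩
      simp only [Finset.coe_image, Set.mem_image, Finset.mem_coe, Finset.mem_range] at hp
      obtain ⟨m, hm, rfl⟩ := hp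
      apply Submodule.subset_span
      set i₀ := min m (k - 1) with hi₀
      refine ⟨evalMapAux a b (Polynomial.X ^ i₀), ?_, evalMapAux a b (Polynomial.X ^ (m - i₀)),
        ?_, ?_⟩
      · rw [grs_eq_map]
        exact ⟨Polynomial.X ^ i₀, Polynomial.mem_degreeLT.2 (by
          rw [Polynomial.degree_X_pow]; exact_mod_cast (by omega : i₀ < k)), rfl⟩
      · rw [grs_eq_map]
        exact ⟨Polynomial.X ^ (m - i₀), Polynomial.mem_degreeLT.2 (by
          rw [Polynomial.degree_X_pow]; exact_mod_cast (by omega : m - i₀ < k)), rfl⟩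
      · funext j
        simp only [evalMapAux, LinearMap.coe_mk, AddHom.coe_mk, Pi.mul_apply,
          Polynomial.eval_pow, Polynomial.eval_X]
        rw [show (a j) ^ m = (a j) ^ i₀ * (a j) ^ (m - i₀) by
          rw [← pow_add]; congr 1; omega]
        ring
  refine ⟨heq, ?_⟩
  rw [heq]
  exact grs_finrank (2 * k - 1) hkn a (b * b) ha fun i =>
    mul_ne_zero (hb i) (hb i)
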